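/- Isolating-pair arc removal: Let N be a network model and let u, v be an isolating pair of nodes in N with layer index of u strictly less than that of v. Let a be an arc of N[u,v]. If ND({w(q) : q a directed path from u to v in N[u,v]}) = ND({w(q) : q a directed path from u to v in N[u,v] not using arc a}), then ND({w(p) : p a directed path from r to t in N}) = ND({w(p) : p a directed path from r to t in N not using arc a}). That is, if the removal of a preserves the Pareto frontier of N[u,v], then it preserves the Pareto frontier of N. -/

import Mathlib

open Pointwise

/-- `y` dominates `y'`: componentwise at least as large and not equal. -/
def dominates {K : ℕ} (y y' : Fin K → ℝ) : Prop :=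
  (∀ k, y' k ≤ y k) ∧ y ≠ y'

/-- The nondominated subset of `S`. -/
def ND {K : ℕ} (S : Set (Fin K → ℝ)) : Set (Fin K → ℝ) :=
  {y ∈ S | ¬ ∃ y' ∈ S, dominates y' y}

/-- `IsPath tl hd p u v`: the list of arcs `p` forms a directed walk from `u` to `v`. -/
def IsPath {V A : Type*} (tl hd : A → V) : List A → V → V → Prop
  | [], u, v => u = v
  | a :: p, u, v => tl a = u ∧ IsPath tl hd p (hd a) v

/-- Total weight of a list of arcs. -/
def pathWeight {A : Type*} {K : ℕ} (w : A → Fin K → ℝ) (p : List A) : Fin K → ℝ :=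
  (p.map w).sum

/-- A layered-acyclic network model with `n + 1` layers (indexed `1, …, n+1`),
a single root in layer `1`, a single terminal in layer `n+1`, every arc going
from one layer to the next, and `K`-dimensional arc weights. -/
structure Network (V A : Type*) (K : ℕ) where
  tl : A → V
  hd : A → V
  w : A → Fin K → ℝ
  n : ℕ
  layer : V → ℕ
  layer_pos : ∀ v, 1 ≤ layer v
  layer_le : ∀ v, layer v ≤ n + 1
  arc_step : ∀ a, layer (hd a) = layer (tl a) + 1
  root : V
  terminal : V
  root_layer : layer root = 1
  terminal_layer : layer terminal = n + 1
  root_unique : ∀ v, layer v = 1 → v = root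
  terminal_unique : ∀ v, layer v = n + 1 → v = terminal
  layer_nonempty : ∀ j, 1 ≤ j → j ≤ n + 1 → ∃ v, layer v = j

namespace Network

variable {V A : Type*} {K : ℕ}

/-- The set of directed paths from `u` to `v`. -/
def Paths (N : Network V A K) (u v : V) : Set (List A) :=
  {p | IsPath N.tl N.hd p u v}

/-- The set of weights of directed paths from `u` to `v`. -/
def weights (N : Network V A K) (u v : V) : Set (Fin K → ℝ) :=
  pathWeight N.w '' N.Paths u v

/-- The Pareto frontier of the network. -/
def Pareto (N : Network V A K) : Set (Fin K → ℝ) :=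
  ND (N.weights N.root N.terminal)

end Network

/-- A node `x` belongs to the sub-network `N[u,v]`: it lies on some directed path
from `u` to `v`, i.e. it is reachable from `u` and `v` is reachable from it. -/
def Network.nodeOnUV {V A : Type*} {K : ℕ} (N : Network V A K) (u v x : V) : Prop :=
  (∃ p, IsPath N.tl N.hd p u x) ∧ (∃ q, IsPath N.tl N.hd q x v)

/-- An arc `a` belongs to the sub-network `N[u,v]`: it lies on some directed path
from `u` to `v`. -/
def Network.arcOnUV {V A : Type*} {K : ℕ} (N : Network V A K) (u v : V) (a : A) : Prop :=
  (∃ p, IsPath N.tl N.hd p u (N.tl a)) ∧ (∃ q, IsPath N.tl N.hd q (N.hd a) v)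

/-- The pair `(u, v)` is isolating in `N`: for every arc `a` of `N` that is not an arc of
`N[u,v]`, (i) if the head of `a` is a node of `N[u,v]` then the head of `a` is `u`, and
(ii) if the tail of `a` is a node of `N[u,v]` then the tail of `a` is `v`. -/
def Network.Isolating {V A : Type*} {K : ℕ} (N : Network V A K) (u v : V) : Prop :=
  ∀ a : A, ¬ N.arcOnUV u v a →
    (N.nodeOnUV u v (N.hd a) → N.hd a = u) ∧ (N.nodeOnUV u v (N.tl a) → N.tl a = v)



section Aux

variable {V A : Type*} {K : ℕ}

lemma isPath_append {tl hd : A → V} {p q : List A} {x z : V} :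
    IsPath tl hd (p ++ q) x z ↔ ∃ y, IsPath tl hd p x y ∧ IsPath tl hd q y z := by
  induction p generalizing x with
  | nil =>
    simp only [List.nil_append]
    constructor
    · exact fun h => ⟨x, rfl, h⟩
    · rintro ⟨y, rfl, h⟩; exact h
  | cons b p ih =>
    constructor
    · rintro ⟨h1, h2⟩
      obtain ⟨y, hy1, hy2⟩ := ih.mp h2
      exact ⟨y, ⟨h1, hy1⟩, hy2⟩
    · rintro ⟨y, ⟨h1, hy1⟩, hy2⟩
      exact ⟨h1, ih.mpr ⟨y, hy1, hy2⟩⟩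

lemma isPath_concat {tl hd : A → V} {p : List A} {b : A} {x z : V} :
    IsPath tl hd (p ++ [b]) x z ↔ IsPath tl hd p x (tl b) ∧ hd b = z := by
  rw [isPath_append]
  constructor
  · rintro ⟨y, h1, h2, h3⟩
    exact ⟨h2 ▸ h1, h3⟩
  · rintro ⟨h1, h2⟩
    exact ⟨tl b, h1, rfl, h2⟩

lemma layer_isPath (N : Network V A K) {p : List A} {x y : V}
    (h : IsPath N.tl N.hd p x y) : N.layer y = N.layer x + p.length := by
  induction p generalizing x with
  | nil => cases h; simp
  | cons b p ih =>
    obtain ⟨h1, h2⟩ := h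
    have := ih h2
    rw [this, N.arc_step, h1, List.length_cons]
    ring

lemma eq_of_isPath_layer (N : Network V A K) {p : List A} {x y : V}
    (h : IsPath N.tl N.hd p x y) (hl : N.layer y ≤ N.layer x) : x = y := by
  have := layer_isPath N h
  have : p.length = 0 := by omega
  rcases List.length_eq_zero_iff.mp this with rfl
  exact h

lemma isPath_mem_split {tl hd : A → V} {p : List A} {b : A} {x z : V}
    (hb : b ∈ p) (h : IsPath tl hd p x z) :
    ∃ p1 p2, p = p1 ++ b :: p2 ∧ IsPath tl hd p1 x (tl b) ∧ IsPath tl hd p2 (hd b) z := by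
  induction p generalizing x with
  | nil => simp at hb
  | cons c p ih =>
    obtain ⟨h1, h2⟩ := h
    rcases List.mem_cons.mp hb with rfl | hb
    · exact ⟨[], p, rfl, h1.symm, h2⟩
    · obtain ⟨p1, p2, rfl, hh1, hh2⟩ := ih hb h2
      exact ⟨c :: p1, p2, rfl, ⟨h1, hh1⟩, hh2⟩

lemma isPath_mem_layer (N : Network V A K) {p : List A} {b : A} {x z : V}
    (hb : b ∈ p) (h : IsPath N.tl N.hd p x z) :
    N.layer x ≤ N.layer (N.tl b) ∧ N.layer (N.hd b) ≤ N.layer z := by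
  obtain ⟨p1, p2, rfl, h1, h2⟩ := isPath_mem_split hb h
  constructor
  · rw [layer_isPath N h1]; omega
  · rw [layer_isPath N h2]; omega

lemma forward_split (N : Network V A K) {u v : V} (hiso : N.Isolating u v) :
    ∀ (q : List A) (x : V), IsPath N.tl N.hd q x N.terminal → N.nodeOnUV u v x →
    ∃ q1 q2, q = q1 ++ q2 ∧ IsPath N.tl N.hd q1 x v ∧ IsPath N.tl N.hd q2 v N.terminal := by
  intro q
  induction q with
  | nil =>
    intro x h hx
    obtain ⟨_, q', hq'⟩ := hx
    have hxv : x = v := by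
      apply eq_of_isPath_layer N hq'
      cases h
      rw [N.terminal_layer]
      exact N.layer_le v
    exact ⟨[], [], rfl, hxv, hxv ▸ h⟩
  | cons b q ih =>
    intro x h hx
    by_cases hxv : x = v
    · exact ⟨[], b :: q, rfl, hxv, hxv ▸ h⟩
    · obtain ⟨h1, h2⟩ := h
      have hb : N.arcOnUV u v b := by
        by_contra hnb
        exact hxv (h1 ▸ (hiso b hnb).2 (h1.symm ▸ hx))
      have hhd : N.nodeOnUV u v (N.hd b) := by
        obtain ⟨⟨p, hp⟩, hq⟩ := hb
        exact ⟨⟨p ++ [b], isPath_concat.mpr ⟨hp, rfl⟩⟩, hq⟩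
      obtain ⟨q1, q2, rfl, hh1, hh2⟩ := ih (N.hd b) h2 hhd
      exact ⟨b :: q1, q2, rfl, ⟨h1, hh1⟩, hh2⟩

lemma backward_split (N : Network V A K) {u v : V} (hiso : N.Isolating u v) :
    ∀ (p : List A) (y : V), IsPath N.tl N.hd p N.root y → N.nodeOnUV u v y →
    ∃ p1 p2, p = p1 ++ p2 ∧ IsPath N.tl N.hd p1 N.root u ∧ IsPath N.tl N.hd p2 u y := by
  intro p
  induction p using List.reverseRecOn with
  | nil =>
    intro y h hy
    cases h
    obtain ⟨⟨p', hp'⟩, _⟩ := hy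
    have huy : u = N.root := by
      apply eq_of_isPath_layer N hp'
      rw [N.root_layer]
      exact N.layer_pos u
    exact ⟨[], [], rfl, huy.symm, huy⟩
  | append_singleton p b ih =>
    intro y h hy
    rw [isPath_concat] at h
    obtain ⟨h1, h2⟩ := h
    subst h2
    by_cases huy : N.hd b = u
    · refine ⟨p ++ [b], [], by simp, isPath_concat.mpr ⟨h1, huy⟩, huy.symm⟩
    · have hb : N.arcOnUV u v b := by
        by_contra hnb
        exact huy ((hiso b hnb).1 hy)
      have htl : N.nodeOnUV u v (N.tl b) := by
        obtain ⟨q', hq'⟩ := hy.2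
        exact ⟨hb.1, ⟨b :: q', ⟨rfl, hq'⟩⟩⟩
      obtain ⟨p1, p2, rfl, hh1, hh2⟩ := ih (N.tl b) h1 htl
      exact ⟨p1, p2 ++ [b], by simp, hh1, isPath_concat.mpr ⟨hh2, rfl⟩⟩

lemma pathWeight_append {w : A → Fin K → ℝ} (p q : List A) :
    pathWeight w (p ++ q) = pathWeight w p + pathWeight w q := by
  simp [pathWeight]

lemma dominates_iff_lt {y y' : Fin K → ℝ} : dominates y' y ↔ y < y' := by
  rw [lt_iff_le_and_ne, dominates, Pi.le_def, ne_comm]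

lemma exists_nd_ge {S : Set (Fin K → ℝ)} (hS : S.Finite) {y : Fin K → ℝ} (hy : y ∈ S) :
    ∃ z ∈ ND S, y ≤ z := by
  obtain ⟨z, ⟨hzS, hyz⟩, hmax⟩ := Set.Finite.exists_maximalFor id {z ∈ S | y ≤ z}
    (hS.subset (Set.sep_subset _ _)) ⟨y, hy, le_refl y⟩
  refine ⟨z, ⟨hzS, ?_⟩, hyz⟩
  rintro ⟨y', hy'S, hdom⟩
  rw [dominates_iff_lt] at hdom
  exact lt_irrefl _ (hdom.trans_le (hmax ⟨hy'S, hyz.trans hdom.le⟩ hdom.le))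

lemma ND_eq_of_subset {S S' : Set (Fin K → ℝ)} (h1 : S' ⊆ S)
    (h2 : ∀ y ∈ S, ∃ z ∈ S', y ≤ z) : ND S = ND S' := by
  ext y
  constructor
  · rintro ⟨hyS, hnd⟩
    obtain ⟨z, hzS', hyz⟩ := h2 y hyS
    have hzy : z = y := by
      by_contra hne
      exact hnd ⟨z, h1 hzS', dominates_iff_lt.mpr (hyz.lt_of_ne (Ne.symm hne))⟩
    refine ⟨hzy ▸ hzS', ?_⟩
    rintro ⟨y', hy', hdom⟩
    exact hnd ⟨y', h1 hy', hdom⟩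
  · rintro ⟨hyS', hnd⟩
    refine ⟨h1 hyS', ?_⟩
    rintro ⟨z, hzS, hdom⟩
    obtain ⟨z', hz'S', hzz'⟩ := h2 z hzS
    rw [dominates_iff_lt] at hdom
    exact hnd ⟨z', hz'S', dominates_iff_lt.mpr (hdom.trans_le hzz')⟩

lemma paths_finite [Finite A] (N : Network V A K) (x y : V) :
    {p : List A | IsPath N.tl N.hd p x y}.Finite := by
  apply (List.finite_length_le A (N.n + 1)).subset
  intro p hp
  have := layer_isPath N hp
  have h1 := N.layer_pos x
  have h2 := N.layer_le y
  simp only [Set.mem_setOf_eq]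
  omega

end Aux

/-- **Isolating-pair arc removal.**  If `(u, v)` is an isolating pair of nodes of `N`
(with the layer of `u` below that of `v`) and `a` is an arc of `N[u,v]` whose removal
preserves the nondominated set of the `u`–`v` path weights, then removing `a` also
preserves the Pareto frontier of `N`. -/
theorem isolating_arc_removal_vpo {V A : Type*} [Fintype V] [Fintype A] {K : ℕ}
    (N : Network V A K) (u v : V) (hlt : N.layer u < N.layer v)
    (hiso : N.Isolating u v) (a : A) (ha : N.arcOnUV u v a)
    (hsub : ND (pathWeight N.w '' {q | IsPath N.tl N.hd q u v}) =
      ND (pathWeight N.w '' {q | IsPath N.tl N.hd q u v ∧ a ∉ q})) :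
    ND (pathWeight N.w '' {p | IsPath N.tl N.hd p N.root N.terminal}) =
      ND (pathWeight N.w '' {p | IsPath N.tl N.hd p N.root N.terminal ∧ a ∉ p}) := by
  apply ND_eq_of_subset
  · exact Set.image_mono (fun p hp => hp.1)
  · rintro y ⟨p, hp, rfl⟩
    by_cases hap : a ∈ p
    · obtain ⟨p1, p2, rfl, hp1, hp2⟩ := isPath_mem_split hap hp
      obtain ⟨⟨pu, hpu⟩, qv, hqv⟩ := ha
      have htlnode : N.nodeOnUV u v (N.tl a) := ⟨⟨pu, hpu⟩, ⟨a :: qv, rfl, hqv⟩⟩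
      have hhdnode : N.nodeOnUV u v (N.hd a) :=
        ⟨⟨pu ++ [a], isPath_concat.mpr ⟨hpu, rfl⟩⟩, ⟨qv, hqv⟩⟩
      obtain ⟨r1, r2, rfl, hr1, hr2⟩ := backward_split N hiso p1 (N.tl a) hp1 htlnode
      obtain ⟨q1, q2, rfl, hq1, hq2⟩ := forward_split N hiso p2 (N.hd a) hp2 hhdnode
      have hm : IsPath N.tl N.hd (r2 ++ a :: q1) u v :=
        isPath_append.mpr ⟨N.tl a, hr2, rfl, hq1⟩
      have hfin := (paths_finite N u v).image (pathWeight N.w)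
      obtain ⟨z, hznd, hmz⟩ := exists_nd_ge hfin ⟨r2 ++ a :: q1, hm, rfl⟩
      rw [hsub] at hznd
      obtain ⟨m', ⟨hm', ham'⟩, rfl⟩ := hznd.1
      refine ⟨pathWeight N.w (r1 ++ m' ++ q2), ⟨r1 ++ m' ++ q2, ⟨?_, ?_⟩, rfl⟩, ?_⟩
      · exact isPath_append.mpr ⟨v, isPath_append.mpr ⟨u, hr1, hm'⟩, hq2⟩
      · intro hmem
        rcases List.mem_append.mp hmem with hmem | hmem
        · rcases List.mem_append.mp hmem with hmem | hmem
          · have := (isPath_mem_layer N hmem hr1).2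
            have h1 := layer_isPath N hpu
            have h2 := N.arc_step a
            omega
          · exact ham' hmem
        · have := (isPath_mem_layer N hmem hq2).1
          have h1 := layer_isPath N hqv
          have h2 := N.arc_step a
          omega
      · have e1 : pathWeight N.w ((r1 ++ r2) ++ a :: (q1 ++ q2)) =
            pathWeight N.w r1 + pathWeight N.w (r2 ++ a :: q1) + pathWeight N.w q2 := by
          simp only [pathWeight, List.map_append, List.sum_append, List.map_cons,
            List.sum_cons]
          abel
        have e2 : pathWeight N.w (r1 ++ m' ++ q2) =
            pathWeight N.w r1 + pathWeight N.w m' + pathWeight N.w q2 := by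
          rw [pathWeight_append, pathWeight_append]
        rw [e1, e2]
        exact add_le_add_left (add_le_add_right hmz _) _
    · exact ⟨pathWeight N.w p, ⟨p, ⟨hp, hap⟩, rfl⟩, le_rfl⟩
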